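/- Let q ≥ 17 be an odd prime power and let b, c ∈ F_q with bc ≠ 0. Then the point U = ⟨(0,b,c)⟩ is H-covered. -/

import Mathlib

noncomputable section

/-- Three points of PG(2,q) are collinear if they have linearly dependent representatives. -/
def Coll3 {F : Type*} [Field F] (P Q R : Projectivization F (Fin 3 → F)) : Prop :=
  ¬ LinearIndependent F ![P.rep, Q.rep, R.rep]

/-- A point is `S`-covered if it lies on a line through two distinct points of `S`. -/
def PGCovered {F : Type*} [Field F] (S : Set (Projectivization F (Fin 3 → F)))
    (P : Projectivization F (Fin 3 → F)) : Prop :=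
  ∃ Q ∈ S, ∃ R ∈ S, Q ≠ R ∧ Coll3 P Q R

/-- A point not in `S` is `S`-free if it is not `S`-covered. -/
def PGFree {F : Type*} [Field F] (S : Set (Projectivization F (Fin 3 → F)))
    (P : Projectivization F (Fin 3 → F)) : Prop :=
  P ∉ S ∧ ¬ PGCovered S P

lemma vec_ne_zero {F : Type*} [Field F] (v : Fin 3 → F) (i : Fin 3) (h : v i ≠ 0) : v ≠ 0 :=
  fun hv => h (by simp [hv])

/-- The set `H = {⟨(1,s⁴,s²)⟩ : s ∈ F}` of points of PG(2,q). -/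
def HSet (F : Type*) [Field F] : Set (Projectivization F (Fin 3 → F)) :=
  {P | ∃ s : F, P = Projectivization.mk F ![1, s ^ 4, s ^ 2] (vec_ne_zero _ 0 (by simp))}

/-- The conic `C : XY = Z²` in PG(2,q).  (Membership does not depend on the choice of
representative since the equation is homogeneous.) -/
def conicC (F : Type*) [Field F] : Set (Projectivization F (Fin 3 → F)) :=
  {P | P.rep 0 * P.rep 1 = P.rep 2 ^ 2}

/-- An arc: a set of points no three of which are collinear. -/
def IsPGArc {F : Type*} [Field F] (S : Set (Projectivization F (Fin 3 → F))) : Prop :=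
  ∀ P ∈ S, ∀ Q ∈ S, ∀ R ∈ S, P ≠ Q → P ≠ R → Q ≠ R → ¬ Coll3 P Q R

/-- A complete arc: an arc which cannot be extended to a larger arc. -/
def IsCompletePGArc {F : Type*} [Field F] (S : Set (Projectivization F (Fin 3 → F))) : Prop :=
  IsPGArc S ∧ ∀ P ∉ S, ¬ IsPGArc (insert P S)


open Polynomial in
lemma my_sq_add_sq {F : Type*} [Field F] [Fintype F] (hF : Fintype.card F % 2 = 1) (x : F) :
    ∃ a b : F, a ^ 2 + b ^ 2 = x := by
  let f : F[X] := X ^ 2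
  let g : F[X] := X ^ 2 - C x
  obtain ⟨a, b, hab⟩ : ∃ a b, f.eval a + g.eval b = 0 :=
    FiniteField.exists_root_sum_quadratic (degree_X_pow 2)
      (degree_X_pow_sub_C (by norm_num) _) hF
  refine ⟨a, b, ?_⟩
  rw [← sub_eq_zero]
  simpa only [f, g, eval_C, eval_X, eval_pow, eval_sub, ← add_sub_assoc] using hab

lemma exists_good_m {F : Type*} [Field F] [Fintype F] (h17 : 17 ≤ Fintype.card F) :
    ∃ m : F, m ≠ 0 ∧ m ^ 2 ≠ 1 ∧ m ^ 2 + 1 ≠ 0 := by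
  classical
  by_cases hE : ∃ a : F, a ^ 2 + 1 = 0
  · obtain ⟨a, ha⟩ := hE
    set s : Finset F := {0, 1, -1, a, -a} with hs
    have hcard : s.card ≤ 5 := by
      refine (Finset.card_insert_le _ _).trans ?_
      refine Nat.succ_le_succ ?_
      refine (Finset.card_insert_le _ _).trans ?_
      refine Nat.succ_le_succ ?_
      refine (Finset.card_insert_le _ _).trans ?_
      refine Nat.succ_le_succ ?_
      refine (Finset.card_insert_le _ _).trans ?_
      simp
    have hne : (sᶜ : Finset F).Nonempty := by
      rw [← Finset.card_pos, Finset.card_compl]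
      omega
    obtain ⟨m, hm⟩ := hne
    rw [Finset.mem_compl, hs] at hm
    simp only [Finset.mem_insert, Finset.mem_singleton, not_or] at hm
    obtain ⟨h0, h1, h2, h3, h4⟩ := hm
    refine ⟨m, h0, ?_, ?_⟩
    · intro h
      have : (m - 1) * (m + 1) = 0 := by linear_combination h
      rcases mul_eq_zero.mp this with h' | h'
      · exact h1 (by linear_combination h')
      · exact h2 (by linear_combination h')
    · intro h
      have : (m - a) * (m + a) = 0 := by linear_combination h - ha
      rcases mul_eq_zero.mp this with h' | h'
      · exact h3 (by linear_combination h')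
      · exact h4 (by linear_combination h')
  · push_neg at hE
    set s : Finset F := {0, 1, -1} with hs
    have hcard : s.card ≤ 3 := by
      refine (Finset.card_insert_le _ _).trans ?_
      refine Nat.succ_le_succ ?_
      refine (Finset.card_insert_le _ _).trans ?_
      simp
    have hne : (sᶜ : Finset F).Nonempty := by
      rw [← Finset.card_pos, Finset.card_compl]
      omega
    obtain ⟨m, hm⟩ := hne
    rw [Finset.mem_compl, hs] at hm
    simp only [Finset.mem_insert, Finset.mem_singleton, not_or] at hm
    obtain ⟨h0, h1, h2⟩ := hm
    refine ⟨m, h0, ?_, hE m⟩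
    intro h
    have : (m - 1) * (m + 1) = 0 := by linear_combination h
    rcases mul_eq_zero.mp this with h' | h'
    · exact h1 (by linear_combination h')
    · exact h2 (by linear_combination h')

lemma key_rep {F : Type*} [Field F] [Fintype F] (h17 : 17 ≤ Fintype.card F)
    (hodd : Fintype.card F % 2 = 1) (d : F) (hd : d ≠ 0) :
    ∃ s t : F, s ^ 2 + t ^ 2 = d ∧ s ^ 2 ≠ t ^ 2 := by
  have hchar : ringChar F ≠ 2 := fun h => by
    have := FiniteField.even_card_iff_char_two.mp h
    omega
  have h2 : (2 : F) ≠ 0 := Ring.two_ne_zero hchar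
  obtain ⟨x, y, hxy⟩ := my_sq_add_sq hodd d
  by_cases h : x ^ 2 = y ^ 2
  · have hx : x ≠ 0 := by
      intro hx0
      apply hd
      rw [← hxy, hx0, ← h, hx0]
      ring
    obtain ⟨m, hm0, hm1, hmi⟩ := exists_good_m h17
    refine ⟨x * (m ^ 2 - 2 * m - 1) / (m ^ 2 + 1), x * (m ^ 2 + 2 * m - 1) / (m ^ 2 + 1), ?_, ?_⟩
    · field_simp
      linear_combination (m ^ 2 + 1) ^ 2 * hxy + (m ^ 2 + 1) ^ 2 * h
    · intro heq
      field_simp at heq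
      have h8 : 8 * m * (m ^ 2 - 1) * x ^ 2 = 0 := by linear_combination -x ^ 2 * heq
      have : m ^ 2 - 1 ≠ 0 := sub_ne_zero.mpr hm1
      have h8' : (8 : F) ≠ 0 := by
        have : (8 : F) = 2 ^ 3 := by norm_num
        rw [this]
        exact pow_ne_zero _ h2
      exact (mul_ne_zero (mul_ne_zero (mul_ne_zero h8' hm0) this) (pow_ne_zero _ hx)) h8
  · exact ⟨x, y, hxy, h⟩

/-- for `q ≥ 17`, the point `U = ⟨(0,b,c)⟩` with `bc ≠ 0` is `H`-covered. -/
theorem stmt3 (F : Type*) [Field F] [Fintype F] (q : ℕ) (hcard : Fintype.card F = q)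
    (hodd : Odd q) (hq : 17 ≤ q) (b c : F) (hbc : b * c ≠ 0) :
    PGCovered (HSet F)
      (Projectivization.mk F ![0, b, c]
        (vec_ne_zero _ 1 (by simpa using left_ne_zero_of_mul hbc))) := by
  
  have hb : b ≠ 0 := left_ne_zero_of_mul hbc
  have hc : c ≠ 0 := right_ne_zero_of_mul hbc
  have h17 : 17 ≤ Fintype.card F := by rw [hcard]; exact hq
  have hodd' : Fintype.card F % 2 = 1 := by rw [hcard]; exact Nat.odd_iff.mp hodd
  obtain ⟨s, t, hst, hne⟩ := key_rep h17 hodd' (b / c) (div_ne_zero hb hc)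
  have hb' : (s ^ 2 + t ^ 2) * c = b := by rw [hst, div_mul_cancel₀ _ hc]
  have hu0 : (![1, s ^ 4, s ^ 2] : Fin 3 → F) ≠ 0 := vec_ne_zero _ 0 (by simp)
  have hv0 : (![1, t ^ 4, t ^ 2] : Fin 3 → F) ≠ 0 := vec_ne_zero _ 0 (by simp)
  have hw0 : (![0, b, c] : Fin 3 → F) ≠ 0 :=
    vec_ne_zero _ 1 (by simpa using left_ne_zero_of_mul hbc)
  refine ⟨Projectivization.mk F ![1, s ^ 4, s ^ 2] hu0, ⟨s, rfl⟩,
          Projectivization.mk F ![1, t ^ 4, t ^ 2] hv0, ⟨t, rfl⟩, ?_, ?_⟩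
  · intro hQR
    rw [Projectivization.mk_eq_mk_iff] at hQR
    obtain ⟨a, ha⟩ := hQR
    have ha0 := congrFun ha 0
    have ha2 := congrFun ha 2
    simp [Units.smul_def] at ha0 ha2
    exact hne (by rw [← ha2, ha0]; simp)
  · intro hLI
    obtain ⟨α, hα⟩ := (Projectivization.mk_eq_mk_iff F _ _ _ _).mp
      (Projectivization.mk_rep (Projectivization.mk F ![0, b, c] hw0))
    obtain ⟨β, hβ⟩ := (Projectivization.mk_eq_mk_iff F _ _ _ _).mp
      (Projectivization.mk_rep (Projectivization.mk F ![1, s ^ 4, s ^ 2] hu0))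
    obtain ⟨γ, hγ⟩ := (Projectivization.mk_eq_mk_iff F _ _ _ _).mp
      (Projectivization.mk_rep (Projectivization.mk F ![1, t ^ 4, t ^ 2] hv0))
    rw [Fintype.linearIndependent_iff] at hLI
    have hsum : ∑ i : Fin 3,
        (![(s ^ 2 - t ^ 2) * (↑β : F) * (↑γ : F), -(c * (↑α : F) * (↑γ : F)),
           c * (↑α : F) * (↑β : F)] : Fin 3 → F) i •
        (![(Projectivization.mk F ![0, b, c] hw0).rep,
           (Projectivization.mk F ![1, s ^ 4, s ^ 2] hu0).rep,
           (Projectivization.mk F ![1, t ^ 4, t ^ 2] hv0).rep] : Fin 3 → (Fin 3 → F)) i = 0 := by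
      rw [Fin.sum_univ_three]
      simp only [Matrix.cons_val_zero, Matrix.cons_val_one, Matrix.head_cons,
        Matrix.cons_val_two, Matrix.tail_cons]
      rw [← hα, ← hβ, ← hγ]
      funext j
      fin_cases j
      · simp [Units.smul_def, smul_smul]
        ring
      · simp [Units.smul_def, smul_smul]
        linear_combination (-(s ^ 2 - t ^ 2)) * (↑α : F) * (↑β : F) * (↑γ : F) * hb'
      · simp [Units.smul_def, smul_smul]
        ring
    have h1 := hLI _ hsum 1
    simp only [Matrix.cons_val_one, Matrix.head_cons, Matrix.cons_val_zero, neg_eq_zero] at h1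
    exact (mul_ne_zero (mul_ne_zero hc α.ne_zero) γ.ne_zero) h1
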